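/- For every real S ∈ [2, 2√2], setting g = √(S²/4 − 1), the identity 1 + (2/(1−2))·log₂(((1−g)/2)^(1/2) + ((1+g)/2)^(1/2)) = 1 − log₂(1 + √(2 − S²/4)) holds; that is, the down-arrow sandwiched Rényi rate function formula at α = 2 coincides with the min-entropy rate function f_{H_min}(S) = 1 − log₂(1 + √(2 − S²/4)). -/
import Mathlib


theorem rate_function_alpha_two_eq_min_entropy (S : ℝ)
    (hS : S ∈ Set.Icc (2 : ℝ) (2 * Real.sqrt 2)) :
    let g : ℝ := Real.sqrt (S ^ 2 / 4 - 1)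
    1 + ((2 : ℝ) / (1 - 2)) *
        Real.logb 2 (((1 - g) / 2) ^ ((1 : ℝ) / 2) + ((1 + g) / 2) ^ ((1 : ℝ) / 2)) =
      1 - Real.logb 2 (1 + Real.sqrt (2 - S ^ 2 / 4)) := by
  obtain ⟨hS1, hS2⟩ := hS
  intro g
  have hsqrt2 : Real.sqrt 2 ^ 2 = 2 := Real.sq_sqrt (by norm_num)
  have hSle : S ^ 2 / 4 ≤ 2 := by nlinarith
  have hSge : 0 ≤ S ^ 2 / 4 - 1 := by nlinarith
  have hg0 : 0 ≤ g := Real.sqrt_nonneg _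
  have hg2 : g ^ 2 = S ^ 2 / 4 - 1 := Real.sq_sqrt hSge
  have hgle : g ≤ 1 := by nlinarith
  have ha : (0 : ℝ) ≤ (1 - g) / 2 := by linarith
  have hb : (0 : ℝ) ≤ (1 + g) / 2 := by linarith
  have hu : (0 : ℝ) ≤ 2 - S ^ 2 / 4 := by linarith
  have hsu : 0 ≤ Real.sqrt (2 - S ^ 2 / 4) := Real.sqrt_nonneg _
  rw [← Real.sqrt_eq_rpow, ← Real.sqrt_eq_rpow]
  have h4 : Real.sqrt 4 = 2 := by
    rw [show (4 : ℝ) = 2 ^ 2 by norm_num, Real.sqrt_sq (by norm_num)]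
  have hprod : Real.sqrt ((1 - g) / 2) * Real.sqrt ((1 + g) / 2)
      = Real.sqrt (2 - S ^ 2 / 4) / 2 := by
    rw [← Real.sqrt_mul ha]
    have h : (1 - g) / 2 * ((1 + g) / 2) = (2 - S ^ 2 / 4) / 4 := by nlinarith [hg2]
    rw [h, Real.sqrt_div hu, h4]
  have hsq : (Real.sqrt ((1 - g) / 2) + Real.sqrt ((1 + g) / 2)) ^ 2
      = 1 + Real.sqrt (2 - S ^ 2 / 4) := by
    have e1 := Real.sq_sqrt ha
    have e2 := Real.sq_sqrt hb
    nlinarith [hprod, e1, e2]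
  have hkey : Real.sqrt ((1 - g) / 2) + Real.sqrt ((1 + g) / 2)
      = Real.sqrt (1 + Real.sqrt (2 - S ^ 2 / 4)) := by
    rw [← hsq, Real.sqrt_sq (by positivity)]
  rw [hkey]
  have h1u : (0 : ℝ) ≤ 1 + Real.sqrt (2 - S ^ 2 / 4) := by linarith
  have hlog : Real.logb 2 (Real.sqrt (1 + Real.sqrt (2 - S ^ 2 / 4)))
      = Real.logb 2 (1 + Real.sqrt (2 - S ^ 2 / 4)) / 2 := by
    unfold Real.logb
    rw [Real.log_sqrt h1u]
    ring
  rw [hlog]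
  ring
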